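/- Let G = (V,E) be a connected finite simple graph with n vertices, fix a vertex a_0 ∈ V, let 0 ≤ α < 1 and 0 < p < ∞, and define ‖f‖_{BV_p(G)} := Var_p f + |f(a_0)|. Then: (a) there exists a constant C = C(n,p,α) such that ‖M_{α,G} f‖_{BV_p(G)} ≤ C ‖f‖_{BV_p(G)} for every f : V → ℝ (for instance one may take the bound Var_p(M_{α,G} f) + |M_{α,G} f(a_0)| ≤ C(‖f‖_{BV_p(G)})); (b) if (f_j) is a sequence of functions with ‖f_j − f‖_{BV_p(G)} → 0 as j → ∞, then ‖M_{α,G} f_j − M_{α,G} f‖_{BV_p(G)} → 0 as j → ∞. -/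

import Mathlib

open scoped Classical

/-- The ball of radius `r` around `e` in the graph metric of `G`
(only vertices reachable from `e` are at finite distance). -/
noncomputable def gball {V : Type*} [Fintype V] (G : SimpleGraph V) (e : V) (r : ℕ) :
    Finset V :=
  Finset.univ.filter fun m => G.Reachable e m ∧ G.dist e m ≤ r

/-- The centered Hardy–Littlewood maximal function on a finite graph. -/
noncomputable def mxHL {V : Type*} [Fintype V] (G : SimpleGraph V) (f : V → ℝ) (e : V) : ℝ :=
  ⨆ r : ℕ, (1 / ((gball G e r).card : ℝ)) * ∑ m ∈ gball G e r, |f m|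

/-- The fractional centered Hardy–Littlewood maximal function on a finite graph. -/
noncomputable def mxFr {V : Type*} [Fintype V] (G : SimpleGraph V) (α : ℝ) (f : V → ℝ)
    (e : V) : ℝ :=
  ⨆ r : ℕ, ((gball G e r).card : ℝ) ^ (α - 1) * ∑ m ∈ gball G e r, |f m|

/-- The `p`-variation of `f : V → ℝ` with respect to the graph `G`
(vertices at distance `1` are exactly the adjacent ones). -/
noncomputable def vp {V : Type*} [Fintype V] (G : SimpleGraph V) (p : ℝ) (f : V → ℝ) : ℝ :=
  ((1 / 2) * ∑ v : V, ∑ w : V, if G.Adj v w then |f v - f w| ^ p else 0) ^ (1 / p)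

/-- The star graph on `Fin n`, with center the vertex with value `0`. -/
def starG (n : ℕ) : SimpleGraph (Fin n) where
  Adj v w := v ≠ w ∧ (v.val = 0 ∨ w.val = 0)
  symm := ⟨fun _ _ h => ⟨h.1.symm, h.2.symm⟩⟩
  loopless := ⟨fun _ h => h.1 rfl⟩

/-- The `ℓ²` norm of a function on a finite vertex set. -/
noncomputable def nrm2 {V : Type*} [Fintype V] (g : V → ℝ) : ℝ :=
  Real.sqrt (∑ v : V, g v ^ 2)

set_option linter.unusedSectionVars false

section Aux
variable {V : Type*} [Fintype V] (G : SimpleGraph V)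

lemma aux_term_nonneg (p : ℝ) (f : V → ℝ) (v w : V) :
    0 ≤ if G.Adj v w then |f v - f w| ^ p else 0 := by
  split
  · exact Real.rpow_nonneg (abs_nonneg _) _
  · exact le_rfl

lemma aux_base_nonneg (p : ℝ) (f : V → ℝ) :
    0 ≤ (1 / 2) * ∑ v : V, ∑ w : V, if G.Adj v w then |f v - f w| ^ p else 0 := by
  apply mul_nonneg (by norm_num)
  exact Finset.sum_nonneg fun v _ => Finset.sum_nonneg fun w _ => aux_term_nonneg G p f v w

lemma vp_nonneg (p : ℝ) (f : V → ℝ) : 0 ≤ vp G p f :=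
  Real.rpow_nonneg (aux_base_nonneg G p f) _

lemma edge_le_vp {p : ℝ} (hp : 0 < p) (f : V → ℝ) {v w : V} (h : G.Adj v w) :
    |f v - f w| ≤ vp G p f := by
  set F : V → V → ℝ := fun a b => if G.Adj a b then |f a - f b| ^ p else 0 with hF
  have hinner : ∀ a b : V, F a b ≤ ∑ c : V, F a c := fun a b =>
    Finset.single_le_sum (fun c _ => aux_term_nonneg G p f a c) (Finset.mem_univ b)
  have houter : (∑ c : V, F v c) + (∑ c : V, F w c) ≤ ∑ a : V, ∑ c : V, F a c := by
    have hsub : ({v, w} : Finset V) ⊆ Finset.univ := Finset.subset_univ _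
    have := Finset.sum_le_sum_of_subset_of_nonneg (f := fun a => ∑ c : V, F a c) hsub
      (fun a _ _ => Finset.sum_nonneg fun c _ => aux_term_nonneg G p f a c)
    rwa [Finset.sum_pair h.ne] at this
  have hFv : F v w = |f v - f w| ^ p := by simp [hF, h]
  have hFw : F w v = |f v - f w| ^ p := by
    simp [hF, h.symm, abs_sub_comm (f w) (f v)]
  have key : |f v - f w| ^ p ≤
      (1 / 2) * ∑ a : V, ∑ c : V, if G.Adj a c then |f a - f c| ^ p else 0 := by
    have h1 := hinner v w
    have h2 := hinner w v
    rw [hFv] at h1; rw [hFw] at h2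
    have : 2 * (|f v - f w| ^ p) ≤ ∑ a : V, ∑ c : V, F a c := by linarith
    simp only [hF] at this ⊢
    linarith
  have habs : |f v - f w| = (|f v - f w| ^ p) ^ (1 / p) := by
    rw [← Real.rpow_mul (abs_nonneg _), mul_one_div_cancel hp.ne', Real.rpow_one]
  rw [habs]
  exact Real.rpow_le_rpow (Real.rpow_nonneg (abs_nonneg _) _) key (by positivity)

lemma walk_bound {p : ℝ} (hp : 0 < p) (f : V → ℝ) {u v : V} (w : G.Walk u v) :
    |f v - f u| ≤ (w.length : ℝ) * vp G p f := by
  induction w with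
  | nil => simp
  | @cons a b c h q ih =>
    have h1 : |f c - f a| ≤ |f c - f b| + |f b - f a| := abs_sub_le _ _ _
    have h2 : |f b - f a| ≤ vp G p f := by
      have := edge_le_vp G hp f h
      rwa [abs_sub_comm] at this
    have h3 : (SimpleGraph.Walk.cons h q).length = q.length + 1 := by
      simp [SimpleGraph.Walk.length_cons]
    rw [h3]
    push_cast
    linarith

lemma pointwise_bound (hG : G.Connected) (a0 : V) {p : ℝ} (hp : 0 < p) (f : V → ℝ) (v : V) :
    |f v| ≤ (Fintype.card V : ℝ) * (vp G p f + |f a0|) := by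
  obtain ⟨w⟩ := hG.preconnected a0 v
  have hq : |f v - f a0| ≤ ((w.toPath : G.Walk a0 v).length : ℝ) * vp G p f :=
    walk_bound G hp f _
  have hlen : ((w.toPath : G.Walk a0 v).length : ℝ) ≤ (Fintype.card V : ℝ) - 1 := by
    have h1 : (w.toPath : G.Walk a0 v).length + 1 ≤ Fintype.card V := (w.toPath.2).length_lt
    have h2 : ((w.toPath : G.Walk a0 v).length : ℝ) + 1 ≤ (Fintype.card V : ℝ) := by
      exact_mod_cast h1
    linarith
  have hcard : (1 : ℝ) ≤ (Fintype.card V : ℝ) := by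
    exact_mod_cast Fintype.card_pos_iff.mpr ⟨v⟩
  have hvp := vp_nonneg G p f
  have ha := abs_nonneg (f a0)
  have h2 : |f v| ≤ |f a0| + |f v - f a0| := by
    have := abs_add_le (f a0) (f v - f a0)
    simpa using this
  nlinarith [mul_le_mul_of_nonneg_right hlen hvp]

lemma mem_gball_self (e : V) (r : ℕ) : e ∈ gball G e r := by
  simp only [gball, Finset.mem_filter, Finset.mem_univ, true_and]
  exact ⟨SimpleGraph.Reachable.refl e, by simp [SimpleGraph.dist_self]⟩

lemma one_le_card_gball (e : V) (r : ℕ) : (1 : ℝ) ≤ ((gball G e r).card : ℝ) := by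
  exact_mod_cast Finset.card_pos.mpr ⟨e, mem_gball_self G e r⟩

lemma coeff_le_one {α : ℝ} (hα1 : α < 1) (e : V) (r : ℕ) :
    ((gball G e r).card : ℝ) ^ (α - 1) ≤ 1 :=
  Real.rpow_le_one_of_one_le_of_nonpos (one_le_card_gball G e r) (by linarith)

lemma term_le {α : ℝ} (hα1 : α < 1) (f : V → ℝ) (e : V) (r : ℕ) :
    ((gball G e r).card : ℝ) ^ (α - 1) * ∑ m ∈ gball G e r, |f m| ≤ ∑ m : V, |f m| := by
  have h0 : 0 ≤ ∑ m ∈ gball G e r, |f m| := Finset.sum_nonneg fun m _ => abs_nonneg _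
  calc ((gball G e r).card : ℝ) ^ (α - 1) * ∑ m ∈ gball G e r, |f m|
      ≤ 1 * ∑ m ∈ gball G e r, |f m| :=
        mul_le_mul_of_nonneg_right (coeff_le_one G hα1 e r) h0
    _ = ∑ m ∈ gball G e r, |f m| := one_mul _
    _ ≤ ∑ m : V, |f m| := Finset.sum_le_sum_of_subset_of_nonneg (Finset.subset_univ _)
        (fun m _ _ => abs_nonneg _)

lemma bdd_range {α : ℝ} (hα1 : α < 1) (f : V → ℝ) (e : V) :
    BddAbove (Set.range fun r : ℕ =>
      ((gball G e r).card : ℝ) ^ (α - 1) * ∑ m ∈ gball G e r, |f m|) :=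
  ⟨∑ m : V, |f m|, by rintro x ⟨r, rfl⟩; exact term_le G hα1 f e r⟩

lemma mxFr_sub_le {α : ℝ} (hα1 : α < 1) (f g : V → ℝ) (e : V) :
    mxFr G α f e ≤ mxFr G α g e + ∑ v : V, |f v - g v| := by
  apply ciSup_le
  intro r
  have hc : (0:ℝ) ≤ ((gball G e r).card : ℝ) ^ (α - 1) := Real.rpow_nonneg (by positivity) _
  have h1 : ∑ m ∈ gball G e r, |f m| ≤
      (∑ m ∈ gball G e r, |g m|) + ∑ m ∈ gball G e r, |f m - g m| := by
    rw [← Finset.sum_add_distrib]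
    apply Finset.sum_le_sum
    intro m _
    have := abs_sub_abs_le_abs_sub (f m) (g m)
    linarith
  have h2 : ((gball G e r).card : ℝ) ^ (α - 1) * ∑ m ∈ gball G e r, |f m| ≤
      ((gball G e r).card : ℝ) ^ (α - 1) * ∑ m ∈ gball G e r, |g m| +
        ∑ v : V, |f v - g v| := by
    have h3 := mul_le_mul_of_nonneg_left h1 hc
    rw [mul_add] at h3
    have h4 : ((gball G e r).card : ℝ) ^ (α - 1) * ∑ m ∈ gball G e r, |f m - g m| ≤
        ∑ v : V, |f v - g v| := term_le G hα1 (fun x => f x - g x) e r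
    linarith
  have h5 : ((gball G e r).card : ℝ) ^ (α - 1) * ∑ m ∈ gball G e r, |g m| ≤ mxFr G α g e :=
    le_ciSup (bdd_range G hα1 g e) r
  linarith

lemma mxFr_abs_sub_le {α : ℝ} (hα1 : α < 1) (f g : V → ℝ) (e : V) :
    |mxFr G α f e - mxFr G α g e| ≤ ∑ v : V, |f v - g v| := by
  rw [abs_sub_le_iff]
  constructor
  · have := mxFr_sub_le G hα1 f g e; linarith
  · have := mxFr_sub_le G hα1 g f e
    have heq : ∑ v : V, |g v - f v| = ∑ v : V, |f v - g v| := by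
      apply Finset.sum_congr rfl; intro v _; rw [abs_sub_comm]
    rw [heq] at this; linarith

lemma D_le {p : ℝ} (hp : 0 < p) (a0 : V) (h : V → ℝ) (B : ℝ) (hB : 0 ≤ B)
    (hbd : ∀ v, |h v| ≤ B) :
    vp G p h + |h a0| ≤ (2 * (((Fintype.card V : ℝ) ^ 2) ^ (1 / p)) + 1) * B := by
  have h2B : (0:ℝ) ≤ 2 * B := by linarith
  have hterm : ∀ v w : V, (if G.Adj v w then |h v - h w| ^ p else 0) ≤ (2 * B) ^ p := by
    intro v w
    split
    · apply Real.rpow_le_rpow (abs_nonneg _) _ hp.le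
      calc |h v - h w| ≤ |h v| + |h w| := abs_sub _ _
        _ ≤ B + B := add_le_add (hbd v) (hbd w)
        _ = 2 * B := by ring
    · exact Real.rpow_nonneg h2B _
  have hsum : (1 / 2) * (∑ v : V, ∑ w : V, if G.Adj v w then |h v - h w| ^ p else 0) ≤
      ((Fintype.card V : ℝ) ^ 2) * (2 * B) ^ p := by
    have h1 : (∑ v : V, ∑ w : V, if G.Adj v w then |h v - h w| ^ p else 0) ≤
        ∑ v : V, ∑ w : V, (2 * B) ^ p :=
      Finset.sum_le_sum fun v _ => Finset.sum_le_sum fun w _ => hterm v w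
    have h2 : (∑ v : V, ∑ w : V, (2 * B) ^ p : ℝ) =
        ((Fintype.card V : ℝ) ^ 2) * (2 * B) ^ p := by
      simp [Finset.sum_const, Finset.card_univ]
      ring
    have h3 := aux_base_nonneg G p h
    rw [h2] at h1
    nlinarith [Real.rpow_nonneg h2B p]
  have hvp : vp G p h ≤ (((Fintype.card V : ℝ) ^ 2) ^ (1 / p)) * (2 * B) := by
    have hx : ((((Fintype.card V : ℝ) ^ 2) * (2 * B) ^ p) : ℝ) ^ (1 / p) =
        (((Fintype.card V : ℝ) ^ 2) ^ (1 / p)) * (2 * B) := by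
      rw [Real.mul_rpow (by positivity) (Real.rpow_nonneg h2B _),
        ← Real.rpow_mul h2B, mul_one_div_cancel hp.ne', Real.rpow_one]
    calc vp G p h ≤ ((((Fintype.card V : ℝ) ^ 2) * (2 * B) ^ p) : ℝ) ^ (1 / p) :=
          Real.rpow_le_rpow (aux_base_nonneg G p h) hsum (by positivity)
      _ = _ := hx
  have ha := hbd a0
  nlinarith [Real.rpow_nonneg (show (0:ℝ) ≤ (Fintype.card V : ℝ)^2 by positivity) (1/p)]

end Aux

/-- the fractional maximal operator is bounded and continuous on
`BV_p(G)` endowed with the norm `‖f‖ = Var_p f + |f a₀|`, for a connected finite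
graph `G`. -/
theorem fractionalMaximal_BV_bounded_and_continuous {V : Type*} [Fintype V]
    (G : SimpleGraph V) (hG : G.Connected) (a0 : V)
    (α : ℝ) (hα0 : 0 ≤ α) (hα1 : α < 1) (p : ℝ) (hp : 0 < p) :
    (∃ C : ℝ, ∀ f : V → ℝ,
        vp G p (mxFr G α f) + |mxFr G α f a0| ≤ C * (vp G p f + |f a0|)) ∧
    (∀ (f : V → ℝ) (fj : ℕ → V → ℝ),
        Filter.Tendsto (fun j => vp G p (fun x => fj j x - f x) + |fj j a0 - f a0|)
          Filter.atTop (nhds 0) →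
        Filter.Tendsto
          (fun j => vp G p (fun x => mxFr G α (fj j) x - mxFr G α f x) +
            |mxFr G α (fj j) a0 - mxFr G α f a0|)
          Filter.atTop (nhds 0)) := by
  set n : ℝ := (Fintype.card V : ℝ) with hn
  set K : ℝ := 2 * (((Fintype.card V : ℝ) ^ 2) ^ (1 / p)) + 1 with hK
  have hKpos : 0 ≤ K := by
    have := Real.rpow_nonneg (show (0:ℝ) ≤ (Fintype.card V : ℝ)^2 by positivity) (1/p)
    simp only [hK]; linarith
  have hnpos : 0 ≤ n := by positivity
  have Dnon : ∀ h : V → ℝ, 0 ≤ vp G p h + |h a0| := fun h =>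
    add_nonneg (vp_nonneg G p h) (abs_nonneg _)
  -- sum of pointwise values bounded by n² times the BV norm
  have sumD : ∀ h : V → ℝ, (∑ u : V, |h u|) ≤ n * (n * (vp G p h + |h a0|)) := by
    intro h
    calc (∑ u : V, |h u|) ≤ ∑ _u : V, n * (vp G p h + |h a0|) :=
          Finset.sum_le_sum fun u _ => pointwise_bound G hG a0 hp h u
      _ = n * (n * (vp G p h + |h a0|)) := by
          rw [Finset.sum_const, Finset.card_univ, nsmul_eq_mul]
  -- key Lipschitz-type estimate
  have key : ∀ f g : V → ℝ,
      vp G p (fun x => mxFr G α f x - mxFr G α g x) + |mxFr G α f a0 - mxFr G α g a0| ≤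
        (K * (n * n)) * (vp G p (fun x => f x - g x) + |f a0 - g a0|) := by
    intro f g
    have hB : ∀ v, |mxFr G α f v - mxFr G α g v| ≤
        n * (n * (vp G p (fun x => f x - g x) + |f a0 - g a0|)) := by
      intro v
      exact (mxFr_abs_sub_le G hα1 f g v).trans (sumD (fun x => f x - g x))
    have hB0 : 0 ≤ n * (n * (vp G p (fun x => f x - g x) + |f a0 - g a0|)) := by
      have := Dnon (fun x => f x - g x)
      positivity
    have := D_le G hp a0 (fun x => mxFr G α f x - mxFr G α g x) _ hB0 hB
    calc vp G p (fun x => mxFr G α f x - mxFr G α g x) + |mxFr G α f a0 - mxFr G α g a0|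
        ≤ K * (n * (n * (vp G p (fun x => f x - g x) + |f a0 - g a0|))) := this
      _ = (K * (n * n)) * (vp G p (fun x => f x - g x) + |f a0 - g a0|) := by ring
  constructor
  · refine ⟨K * (n * n), fun f => ?_⟩
    have hB : ∀ v, |mxFr G α f v| ≤ n * (n * (vp G p f + |f a0|)) := by
      intro v
      calc |mxFr G α f v| ≤ ∑ u : V, |f u| := by
            have hzero : mxFr G α (fun _ : V => (0:ℝ)) v = 0 := by
              unfold mxFr
              simp
            have := mxFr_abs_sub_le G hα1 f (fun _ => 0) v
            simpa [hzero] using this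
        _ ≤ n * (n * (vp G p f + |f a0|)) := sumD f
    have hB0 : 0 ≤ n * (n * (vp G p f + |f a0|)) := by
      have := Dnon f; positivity
    have := D_le G hp a0 (mxFr G α f) _ hB0 hB
    calc vp G p (mxFr G α f) + |mxFr G α f a0|
        ≤ K * (n * (n * (vp G p f + |f a0|))) := this
      _ = (K * (n * n)) * (vp G p f + |f a0|) := by ring
  · intro f fj htend
    apply squeeze_zero (fun j => Dnon _)
      (fun j => key (fj j) f)
    have := htend.const_mul (K * (n * n))
    simpa using this
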